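/- Let λ₁, λ₂ be coprime positive integers with λ₁ ≡ λ₂ + 1 (mod 3), and S = {0, λ₁, λ₁+λ₂}. Then there exists a set A ⊆ ℤ, periodic with period 2λ₁+λ₂, containing no translate of S and no translate of -S, with density ⌊(2/3)(2λ₁+λ₂)⌋/(2λ₁+λ₂). Hence d_f(S,-S) ≥ ⌊(2/3)(2λ₁+λ₂)⌋/(2λ₁+λ₂). -/

import Mathlib

open Filter Set

/-- The translateSet `S + t` of a set of integers. -/
def translateSet (S : Set ℤ) (t : ℤ) : Set ℤ := (· + t) '' S

/-- Upper density of a set of integers. -/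
noncomputable def upperDensity (A : Set ℤ) : ℝ :=
  Filter.limsup (fun n : ℕ => ((A ∩ Set.Icc (-(n : ℤ)) (n : ℤ)).ncard : ℝ) / (2 * n + 1)) Filter.atTop

/-- Lower density of a set of integers. -/
noncomputable def lowerDensity (A : Set ℤ) : ℝ :=
  Filter.liminf (fun n : ℕ => ((A ∩ Set.Icc (-(n : ℤ)) (n : ℤ)).ncard : ℝ) / (2 * n + 1)) Filter.atTop

/-- `A` is `S`-covering: every integer lies in some translateSet `S + a`, `a ∈ A`. -/
def SCovering (S A : Set ℤ) : Prop := ∀ t : ℤ, ∃ a ∈ A, t ∈ translateSet S a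

/-- `A` is `S`-blocking: `A` meets every translateSet of `S`. -/
def SBlocking (S A : Set ℤ) : Prop := ∀ t : ℤ, (A ∩ translateSet S t).Nonempty

/-- `A` is `S`-free: `A` contains no translateSet of `S`. -/
def SFree (S A : Set ℤ) : Prop := ∀ t : ℤ, ¬ translateSet S t ⊆ A

/-- `A` is `S`-packing: distinct translates `S + a₁`, `S + a₂` with `a₁, a₂ ∈ A` are disjoint. -/
def SPacking (S A : Set ℤ) : Prop :=
  ∀ a₁ ∈ A, ∀ a₂ ∈ A, a₁ ≠ a₂ → Disjoint (translateSet S a₁) (translateSet S a₂)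

/-- Maximum packing density of `S`. -/
noncomputable def dP (S : Set ℤ) : ℝ := sSup (upperDensity '' {A | SPacking S A})

/-- Minimum covering density of `S`. -/
noncomputable def dC (S : Set ℤ) : ℝ := sInf (lowerDensity '' {A | SCovering S A})

/-- Minimum blocking density of `S`. -/
noncomputable def dB (S : Set ℤ) : ℝ := sInf (lowerDensity '' {A | SBlocking S A})

/-- `d_f(S)`: supremum of upper densities of `S`-free sets. -/
noncomputable def dF (S : Set ℤ) : ℝ := sSup (upperDensity '' {A | SFree S A})

/-- `d_f(S, -S)`: supremum of upper densities of sets free of translates of both `S` and `-S`. -/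
noncomputable def dF2 (S : Set ℤ) : ℝ := sSup (upperDensity '' {A | SFree S A ∧ SFree (-S) A})


section Stmt4Proof
open Topology


namespace Stmt4Helpers

lemma per_all {A : Set ℤ} {m : ℤ} (hper : ∀ x, x ∈ A ↔ x + m ∈ A) (t x : ℤ) :
    x ∈ A ↔ x + m * t ∈ A := by
  induction t using Int.induction_on with
  | zero => simp
  | succ n ih =>
      rw [show x + m * ((n : ℤ) + 1) = (x + m * n) + m by ring]
      exact ih.trans (hper _)
  | pred n ih =>
      have h := hper (x + m * (-(n : ℤ) - 1))
      rw [show x + m * (-(n : ℤ) - 1) + m = x + m * (-(n : ℤ)) by ring] at h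
      exact ih.trans h.symm

lemma mem_emod {A : Set ℤ} {m : ℤ} (hper : ∀ x, x ∈ A ↔ x + m ∈ A) (x : ℤ) :
    x ∈ A ↔ x % m ∈ A := by
  have h := per_all hper (x / m) (x % m)
  rw [Int.emod_add_mul_ediv] at h
  exact h.symm

lemma inter_Icc_finite (A : Set ℤ) (a b : ℤ) : (A ∩ Icc a b).Finite :=
  (Set.finite_Icc a b).subset Set.inter_subset_right

lemma window {A : Set ℤ} {m : ℤ} (hm : 0 < m) (hper : ∀ x, x ∈ A ↔ x + m ∈ A) (a : ℤ) :
    (A ∩ Icc a (a + m - 1)).ncard = (A ∩ Icc 0 (m - 1)).ncard := by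
  have himg : (· % m) '' (A ∩ Icc a (a + m - 1)) = A ∩ Icc 0 (m - 1) := by
    ext r
    simp only [Set.mem_image, Set.mem_inter_iff, Set.mem_Icc]
    constructor
    · rintro ⟨x, ⟨hxA, hx1, hx2⟩, rfl⟩
      refine ⟨(mem_emod hper x).mp hxA, ?_, ?_⟩
      · exact Int.emod_nonneg x (by omega : m ≠ 0)
      · have h2 := Int.emod_lt_of_pos x hm
        omega
    · rintro ⟨hrA, hr1, hr2⟩
      refine ⟨a + (r - a) % m, ⟨?_, ?_, ?_⟩, ?_⟩
      · have h := per_all hper (-((r - a) / m)) r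
        rw [show r + m * -((r - a) / m) = a + ((r - a) - m * ((r - a)/m)) by ring] at h
        rw [← Int.emod_def] at h
        exact h.mp hrA
      · have h1 := Int.emod_nonneg (r - a) (by omega : m ≠ 0)
        omega
      · have h2 := Int.emod_lt_of_pos (r - a) hm
        omega
      · have heq : a + (r - a) % m = r + m * (-((r - a) / m)) := by
          rw [Int.emod_def]; ring
        rw [heq, Int.add_mul_emod_self_left, Int.emod_eq_of_lt hr1 (by omega)]
  have hinj : Set.InjOn (· % m) (A ∩ Icc a (a + m - 1)) := by
    rintro x ⟨-, hx⟩ y ⟨-, hy⟩ hxy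
    rw [Set.mem_Icc] at hx hy
    have hdvd : m ∣ y - x := Int.ModEq.dvd hxy
    have := Int.eq_zero_of_dvd_of_natAbs_lt_natAbs hdvd (by omega)
    omega
  rw [← himg, Set.ncard_image_of_injOn hinj]

lemma count_bounds {A : Set ℤ} {m : ℤ} (hm : 0 < m) (hper : ∀ x, x ∈ A ↔ x + m ∈ A) :
    ∀ (a b : ℤ), a ≤ b + 1 →
      ((A ∩ Icc 0 (m - 1)).ncard : ℤ) * ((b + 1 - a) / m) ≤ ((A ∩ Icc a b).ncard : ℤ) ∧
      ((A ∩ Icc a b).ncard : ℤ) ≤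
        ((A ∩ Icc 0 (m - 1)).ncard : ℤ) * ((b + 1 - a) / m) + ((A ∩ Icc 0 (m - 1)).ncard : ℤ) := by
  set d : ℤ := ((A ∩ Icc 0 (m - 1)).ncard : ℤ) with hd
  have hd0 : 0 ≤ d := Int.natCast_nonneg _
  have key : ∀ (L : ℕ) (a b : ℤ), a ≤ b + 1 → b + 1 - a = L →
      d * ((b + 1 - a) / m) ≤ ((A ∩ Icc a b).ncard : ℤ) ∧
      ((A ∩ Icc a b).ncard : ℤ) ≤ d * ((b + 1 - a) / m) + d := by
    intro L
    induction L using Nat.strong_induction_on with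
    | _ L ih =>
      intro a b hab hL
      by_cases hsmall : b + 1 - a < m
      · have hq : (b + 1 - a) / m = 0 := Int.ediv_eq_zero_of_lt (by omega) hsmall
        rw [hq, mul_zero]
        constructor
        · exact Int.natCast_nonneg _
        · have hsub : A ∩ Icc a b ⊆ A ∩ Icc a (a + m - 1) :=
            Set.inter_subset_inter_right _ (Set.Icc_subset_Icc_right (by omega))
          have := Set.ncard_le_ncard hsub (inter_Icc_finite A a (a + m - 1))
          rw [window hm hper a] at this
          rw [hd]
          omega
      · have hIcc : Icc a b = Icc a (a + m - 1) ∪ Icc (a + m) b := by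
          ext x; simp only [Set.mem_Icc, Set.mem_union]; omega
        have hsplit : A ∩ Icc a b = (A ∩ Icc a (a + m - 1)) ∪ (A ∩ Icc (a + m) b) := by
          rw [hIcc, Set.inter_union_distrib_left]
        have hdisj : Disjoint (A ∩ Icc a (a + m - 1)) (A ∩ Icc (a + m) b) := by
          rw [Set.disjoint_left]
          rintro x ⟨-, hx1⟩ ⟨-, hx2⟩
          rw [Set.mem_Icc] at hx1 hx2
          omega
        have hcard : (A ∩ Icc a b).ncard
            = (A ∩ Icc a (a + m - 1)).ncard + (A ∩ Icc (a + m) b).ncard := by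
          rw [hsplit]
          exact Set.ncard_union_eq hdisj (inter_Icc_finite A _ _) (inter_Icc_finite A _ _)
        have hwin := window hm hper a
        have hL' : b + 1 - (a + m) = (L - m.toNat : ℕ) := by omega
        have hrec := ih (L - m.toNat) (by omega) (a + m) b (by omega) hL'
        have hq : (b + 1 - a) / m = (b + 1 - (a + m)) / m + 1 := by
          have := Int.add_mul_ediv_right (b + 1 - (a + m)) 1 (by omega : m ≠ 0)
          rw [show b + 1 - (a + m) + 1 * m = b + 1 - a by ring] at this
          omega
        have hexp : d * ((b + 1 - a) / m) = d * ((b + 1 - (a + m)) / m) + d := by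
          rw [hq]; ring
        rw [hcard, hwin]
        push_cast
        rw [← hd] at *
        rw [hexp]
        constructor
        · linarith [hrec.1]
        · linarith [hrec.2]
  intro a b hab
  exact key (b + 1 - a).toNat a b hab (by omega)

lemma ncard_Icc_int (a b : ℤ) : (Set.Icc a b).ncard = (b + 1 - a).toNat := by
  rw [← Finset.coe_Icc, Set.ncard_coe_finset, Int.card_Icc]

lemma tendsto_density {A : Set ℤ} {m : ℤ} (hm : 0 < m) (hper : ∀ x, x ∈ A ↔ x + m ∈ A) :
    Tendsto (fun n : ℕ => ((A ∩ Icc (-(n : ℤ)) (n : ℤ)).ncard : ℝ) / (2 * n + 1)) atTop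
      (𝓝 (((A ∩ Icc 0 (m - 1)).ncard : ℝ) / m)) := by
  set d : ℕ := (A ∩ Icc 0 (m - 1)).ncard with hd
  have hLtend : Tendsto (fun n : ℕ => (2 * (n : ℝ) + 1)) atTop atTop := by
    apply tendsto_atTop_mono (fun n => by push_cast; linarith [Nat.cast_nonneg (α := ℝ) n] :
      ∀ n : ℕ, (n : ℝ) ≤ 2 * (n : ℝ) + 1)
    exact tendsto_natCast_atTop_atTop
  have h0 : Tendsto (fun n : ℕ => (d : ℝ) / (2 * n + 1)) atTop (𝓝 0) :=
    Tendsto.div_atTop tendsto_const_nhds hLtend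
  have hlow : Tendsto (fun n : ℕ => (d : ℝ) / m - (d : ℝ) / (2 * n + 1)) atTop (𝓝 ((d : ℝ) / m)) := by
    have := h0.const_sub ((d : ℝ) / m)
    simpa using this
  have hhigh : Tendsto (fun n : ℕ => (d : ℝ) / m + (d : ℝ) / (2 * n + 1)) atTop (𝓝 ((d : ℝ) / m)) := by
    have := h0.const_add ((d : ℝ) / m)
    simpa using this
  refine tendsto_of_tendsto_of_tendsto_of_le_of_le hlow hhigh ?_ ?_
  all_goals
    intro n
    have hb := count_bounds hm hper (-(n : ℤ)) (n : ℤ) (by omega)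
    set c : ℕ := (A ∩ Icc (-(n : ℤ)) (n : ℤ)).ncard with hc
    set q : ℤ := ((n : ℤ) + 1 - (-(n : ℤ))) / m with hq
    have hqm : m * q = (2 * (n : ℤ) + 1) - ((2 * (n : ℤ) + 1) % m) := by
      rw [hq, show ((n : ℤ) + 1 - (-(n : ℤ))) = 2 * (n : ℤ) + 1 by ring]
      rw [Int.emod_def]; ring
    have hr1 : 0 ≤ (2 * (n : ℤ) + 1) % m := Int.emod_nonneg _ (by omega)
    have hr2 : (2 * (n : ℤ) + 1) % m < m := Int.emod_lt_of_pos _ hm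
    have hLpos : (0 : ℝ) < 2 * (n : ℝ) + 1 := by positivity
    have hmR : (0 : ℝ) < (m : ℝ) := by exact_mod_cast hm
    -- convert the integer bounds into real bounds
    have hlowZ : (d : ℤ) * q ≤ (c : ℤ) := hb.1
    have hhighZ : (c : ℤ) ≤ (d : ℤ) * q + (d : ℤ) := hb.2
    have hqmR : (m : ℝ) * (q : ℝ) = (2 * (n : ℝ) + 1) - (((2 * (n : ℤ) + 1) % m : ℤ) : ℝ) := by
      exact_mod_cast hqm
    have hlowR : (d : ℝ) * (q : ℝ) ≤ (c : ℝ) := by exact_mod_cast hlowZ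
    have hhighR : (c : ℝ) ≤ (d : ℝ) * (q : ℝ) + (d : ℝ) := by exact_mod_cast hhighZ
    have hrR1 : (0 : ℝ) ≤ (((2 * (n : ℤ) + 1) % m : ℤ) : ℝ) := by exact_mod_cast hr1
    have hrR2 : (((2 * (n : ℤ) + 1) % m : ℤ) : ℝ) ≤ (m : ℝ) := by exact_mod_cast hr2.le
    have hd0 : (0 : ℝ) ≤ (d : ℝ) := Nat.cast_nonneg d
  · -- lower bound : d/m - d/L ≤ c/L
    dsimp only
    rw [← hc]
    rw [div_sub_div _ _ (by positivity) (by positivity), div_le_div_iff₀ (by positivity) hLpos]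
    have p1 : (d : ℝ) * (q : ℝ) * (m : ℝ) ≤ (c : ℝ) * (m : ℝ) :=
      mul_le_mul_of_nonneg_right hlowR hmR.le
    have p2 : (d : ℝ) * (((2 * (n : ℤ) + 1) % m : ℤ) : ℝ) ≤ (d : ℝ) * (m : ℝ) :=
      mul_le_mul_of_nonneg_left hrR2 hd0
    have p3 : (d : ℝ) * ((m : ℝ) * (q : ℝ))
        = (d : ℝ) * ((2 * (n : ℝ) + 1) - (((2 * (n : ℤ) + 1) % m : ℤ) : ℝ)) := by rw [hqmR]
    have hkey : (d : ℝ) * (2 * (n : ℝ) + 1) - (d : ℝ) * (m : ℝ) ≤ (c : ℝ) * (m : ℝ) := by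
      nlinarith [p1, p2, p3]
    nlinarith [mul_le_mul_of_nonneg_right hkey hLpos.le]
  · -- upper bound : c/L ≤ d/m + d/L
    dsimp only
    rw [← hc]
    rw [div_add_div _ _ (by positivity) (by positivity), div_le_div_iff₀ hLpos (by positivity)]
    have p1 : (c : ℝ) * (m : ℝ) ≤ ((d : ℝ) * (q : ℝ) + (d : ℝ)) * (m : ℝ) :=
      mul_le_mul_of_nonneg_right hhighR hmR.le
    have p2 : (0 : ℝ) ≤ (d : ℝ) * (((2 * (n : ℤ) + 1) % m : ℤ) : ℝ) :=
      mul_nonneg hd0 hrR1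
    have p3 : (d : ℝ) * ((m : ℝ) * (q : ℝ))
        = (d : ℝ) * ((2 * (n : ℝ) + 1) - (((2 * (n : ℤ) + 1) % m : ℤ) : ℝ)) := by rw [hqmR]
    have hkey : (c : ℝ) * (m : ℝ) ≤ (d : ℝ) * (2 * (n : ℝ) + 1) + (d : ℝ) * (m : ℝ) := by
      nlinarith [p1, p2, p3]
    nlinarith [mul_le_mul_of_nonneg_right hkey hLpos.le]

end Stmt4Helpers

namespace Stmt4Helpers

lemma upperDensity_le_one (B : Set ℤ) : upperDensity B ≤ 1 := by
  have hb : ∀ n : ℕ, ((B ∩ Set.Icc (-(n : ℤ)) (n : ℤ)).ncard : ℝ) / (2 * n + 1) ≤ 1 := by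
    intro n
    have hcard : (B ∩ Set.Icc (-(n : ℤ)) (n : ℤ)).ncard ≤ (2 * n + 1 : ℕ) := by
      have h := Set.ncard_le_ncard (Set.inter_subset_right (s := B))
        (Set.finite_Icc (-(n : ℤ)) (n : ℤ))
      rw [ncard_Icc_int] at h
      omega
    rw [div_le_one (by positivity)]
    calc ((B ∩ Set.Icc (-(n : ℤ)) (n : ℤ)).ncard : ℝ) ≤ ((2 * n + 1 : ℕ) : ℝ) := by
          exact_mod_cast hcard
      _ = 2 * n + 1 := by push_cast; ring
  apply limsup_le_of_le ?_ (Filter.Eventually.of_forall hb)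
  exact Filter.isCoboundedUnder_le_of_le atTop (fun n => by positivity)

/-- the pattern function: j ↦ 3⌊j/2⌋ + (j mod 2), enumerating {0,1,3,4,6,7,...} -/
def pf (j : ℤ) : ℤ := 3 * (j / 2) + j % 2

end Stmt4Helpers

open Stmt4Helpers in
theorem stmt4 (l1 l2 : ℤ) (h1 : 0 < l1) (h2 : 0 < l2) (hco : Int.gcd l1 l2 = 1)
    (hmod : l1 % 3 = (l2 + 1) % 3) :
    (∃ A : Set ℤ,
      (∀ x : ℤ, x ∈ A ↔ x + (2 * l1 + l2) ∈ A) ∧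
      SFree ({0, l1, l1 + l2} : Set ℤ) A ∧
      SFree (-({0, l1, l1 + l2} : Set ℤ)) A ∧
      upperDensity A = (⌊(2 : ℝ) / 3 * (2 * l1 + l2)⌋ : ℝ) / (2 * l1 + l2) ∧
      lowerDensity A = (⌊(2 : ℝ) / 3 * (2 * l1 + l2)⌋ : ℝ) / (2 * l1 + l2)) ∧
    dF2 ({0, l1, l1 + l2} : Set ℤ) ≥ (⌊(2 : ℝ) / 3 * (2 * l1 + l2)⌋ : ℝ) / (2 * l1 + l2) := by
  set m : ℤ := 2 * l1 + l2 with hmdef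
  obtain ⟨k, hk⟩ : ∃ k : ℤ, m = 3 * k + 2 := ⟨(m - 2) / 3, by omega⟩
  have hk0 : 0 ≤ k := by omega
  have hm0 : 0 < m := by omega
  have hcop : IsCoprime m l1 := by
    have h := (Int.isCoprime_iff_gcd_eq_one.mpr (by rwa [Int.gcd_comm] : Int.gcd l2 l1 = 1))
    have h2' := h.add_mul_right_left 2
    rwa [show l2 + 2 * l1 = m by rw [hmdef]; ring] at h2'
  set A : Set ℤ := {x : ℤ | ∃ j : ℤ, 0 ≤ j ∧ j ≤ 2 * k ∧ m ∣ x - l1 * pf j} with hAdef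
  have hper : ∀ x : ℤ, x ∈ A ↔ x + m ∈ A := by
    intro x
    constructor
    · rintro ⟨j, hj0, hj1, q, hq⟩
      exact ⟨j, hj0, hj1, q + 1,
        by rw [show x + m - l1 * pf j = (x - l1 * pf j) + m by ring, hq]; ring⟩
    · rintro ⟨j, hj0, hj1, q, hq⟩
      refine ⟨j, hj0, hj1, q - 1, ?_⟩
      have hx : x - l1 * pf j = (x + m - l1 * pf j) - m := by ring
      rw [hx, hq]; ring
  have hpf_bound : ∀ j : ℤ, 0 ≤ j → j ≤ 2 * k → 0 ≤ pf j ∧ pf j ≤ 3 * k := by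
    intro j hj0 hj1; unfold pf; omega
  have hcancel : ∀ e : ℤ, m ∣ l1 * e → m ∣ e := fun e he => hcop.dvd_of_dvd_mul_left he
  have hno3 : ∀ j1 j2 j3 : ℤ, 0 ≤ j1 → j1 ≤ 2 * k → 0 ≤ j2 → j2 ≤ 2 * k → 0 ≤ j3 → j3 ≤ 2 * k →
      m ∣ l1 * (pf j2 - pf j1 - 1) → m ∣ l1 * (pf j3 - pf j1 + 1) → False := by
    intro j1 j2 j3 ha0 ha1 hb0 hb1 hc0 hc1 hd2 hd3
    have e2 := hcancel _ hd2
    have e3 := hcancel _ hd3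
    obtain ⟨p10, p11⟩ := hpf_bound j1 ha0 ha1
    obtain ⟨p20, p21⟩ := hpf_bound j2 hb0 hb1
    obtain ⟨p30, p31⟩ := hpf_bound j3 hc0 hc1
    have he2 : pf j2 - pf j1 - 1 = 0 :=
      Int.eq_zero_of_dvd_of_natAbs_lt_natAbs e2 (by omega)
    have he3 : pf j3 - pf j1 + 1 = 0 :=
      Int.eq_zero_of_dvd_of_natAbs_lt_natAbs e3 (by omega)
    have q1 : pf j1 = 3 * (j1 / 2) + j1 % 2 := rfl
    have q2 : pf j2 = 3 * (j2 / 2) + j2 % 2 := rfl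
    have q3 : pf j3 = 3 * (j3 / 2) + j3 % 2 := rfl
    omega
  have hfree1 : SFree ({0, l1, l1 + l2} : Set ℤ) A := by
    intro t hsub
    have ht1 : t ∈ A := hsub ⟨0, by simp, by simp⟩
    have ht2 : l1 + t ∈ A := hsub ⟨l1, by simp, rfl⟩
    have ht3 : l1 + l2 + t ∈ A := hsub ⟨l1 + l2, by simp, rfl⟩
    obtain ⟨j1, ha0, ha1, hda⟩ := ht1
    obtain ⟨j2, hb0, hb1, hdb⟩ := ht2
    obtain ⟨j3, hc0, hc1, hdc⟩ := ht3
    apply hno3 j1 j2 j3 ha0 ha1 hb0 hb1 hc0 hc1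
    · have h := dvd_sub hda hdb
      rwa [show (t - l1 * pf j1) - ((l1 + t) - l1 * pf j2) = l1 * (pf j2 - pf j1 - 1) by ring] at h
    · have h := dvd_add (dvd_sub hda hdc) (dvd_refl m)
      rwa [show (t - l1 * pf j1) - ((l1 + l2 + t) - l1 * pf j3) + m = l1 * (pf j3 - pf j1 + 1)
        from by rw [hmdef]; ring] at h
  have hfree2 : SFree (-({0, l1, l1 + l2} : Set ℤ)) A := by
    intro t hsub
    have ht1 : t ∈ A := hsub ⟨0, by simp, by simp⟩
    have ht2 : -l1 + t ∈ A := hsub ⟨-l1, by simp, rfl⟩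
    have ht3 : -(l1 + l2) + t ∈ A := hsub ⟨-(l1 + l2), by simp, rfl⟩
    obtain ⟨j1, ha0, ha1, hda⟩ := ht1
    obtain ⟨j2, hb0, hb1, hdb⟩ := ht2
    obtain ⟨j3, hc0, hc1, hdc⟩ := ht3
    apply hno3 j1 j3 j2 ha0 ha1 hc0 hc1 hb0 hb1
    · have h := dvd_sub (dvd_sub hda hdc) (dvd_refl m)
      rwa [show (t - l1 * pf j1) - ((-(l1 + l2) + t) - l1 * pf j3) - m = l1 * (pf j3 - pf j1 - 1)
        from by rw [hmdef]; ring] at h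
    · have h := dvd_sub hda hdb
      rwa [show (t - l1 * pf j1) - ((-l1 + t) - l1 * pf j2) = l1 * (pf j2 - pf j1 + 1) by ring] at h
  -- counting the fundamental domain
  have himgA : A ∩ Set.Icc 0 (m - 1) = (fun j => (l1 * pf j) % m) '' (Set.Icc 0 (2 * k)) := by
    ext x
    simp only [Set.mem_inter_iff, Set.mem_Icc, Set.mem_image, hAdef, Set.mem_setOf_eq]
    constructor
    · rintro ⟨⟨j, hj0, hj1, hdvd⟩, hx0, hx1⟩
      refine ⟨j, ⟨hj0, hj1⟩, ?_⟩
      have h : (l1 * pf j) % m = x % m := Int.modEq_iff_dvd.mpr hdvd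
      rwa [Int.emod_eq_of_lt hx0 (by omega)] at h
    · rintro ⟨j, ⟨hj0, hj1⟩, rfl⟩
      refine ⟨⟨j, hj0, hj1, ⟨-(l1 * pf j / m), by rw [Int.emod_def]; ring⟩⟩, ?_, ?_⟩
      · exact Int.emod_nonneg _ (by omega)
      · have := Int.emod_lt_of_pos (l1 * pf j) hm0; omega
  have hinjA : Set.InjOn (fun j => (l1 * pf j) % m) (Set.Icc 0 (2 * k)) := by
    intro j1 hj1 j2 hj2 h
    simp only [Set.mem_Icc] at hj1 hj2
    have h' : (l1 * pf j1) % m = (l1 * pf j2) % m := h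
    have h2 := Int.ModEq.dvd h'
    rw [show l1 * pf j2 - l1 * pf j1 = l1 * (pf j2 - pf j1) by ring] at h2
    have h3 := hcancel _ h2
    obtain ⟨p10, p11⟩ := hpf_bound j1 hj1.1 hj1.2
    obtain ⟨p20, p21⟩ := hpf_bound j2 hj2.1 hj2.2
    have he : pf j2 - pf j1 = 0 :=
      Int.eq_zero_of_dvd_of_natAbs_lt_natAbs h3 (by omega)
    have q1 : pf j1 = 3 * (j1 / 2) + j1 % 2 := rfl
    have q2 : pf j2 = 3 * (j2 / 2) + j2 % 2 := rfl
    omega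
  have hcount : (A ∩ Set.Icc 0 (m - 1)).ncard = (2 * k + 1).toNat := by
    rw [himgA, Set.ncard_image_of_injOn hinjA, ncard_Icc_int]
    norm_num
  have htend := tendsto_density hm0 hper
  have hddR : ((A ∩ Set.Icc 0 (m - 1)).ncard : ℝ) = 2 * (k : ℝ) + 1 := by
    rw [hcount]
    have : ((2 * k + 1).toNat : ℤ) = 2 * k + 1 := Int.toNat_of_nonneg (by omega)
    exact_mod_cast this
  have hmR : (m : ℝ) = 2 * (l1 : ℝ) + (l2 : ℝ) := by rw [hmdef]; push_cast; ring
  have hkR : 2 * (l1 : ℝ) + (l2 : ℝ) = 3 * (k : ℝ) + 2 := by exact_mod_cast hk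
  have hfloor : ⌊(2 : ℝ) / 3 * (2 * (l1 : ℝ) + (l2 : ℝ))⌋ = 2 * k + 1 := by
    rw [Int.floor_eq_iff, hkR]
    constructor
    · push_cast; linarith
    · push_cast; linarith
  have hV : ((A ∩ Set.Icc 0 (m - 1)).ncard : ℝ) / (m : ℝ)
      = (⌊(2 : ℝ) / 3 * (2 * (l1 : ℝ) + (l2 : ℝ))⌋ : ℝ) / (2 * (l1 : ℝ) + (l2 : ℝ)) := by
    rw [hddR, hmR, hfloor, hkR]
    push_cast
    ring
  have hUD : upperDensity A = (⌊(2 : ℝ) / 3 * (2 * (l1 : ℝ) + (l2 : ℝ))⌋ : ℝ)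
      / (2 * (l1 : ℝ) + (l2 : ℝ)) := by
    unfold upperDensity
    exact htend.limsup_eq.trans hV
  have hLD : lowerDensity A = (⌊(2 : ℝ) / 3 * (2 * (l1 : ℝ) + (l2 : ℝ))⌋ : ℝ)
      / (2 * (l1 : ℝ) + (l2 : ℝ)) := by
    unfold lowerDensity
    exact htend.liminf_eq.trans hV
  refine ⟨⟨A, hper, hfree1, hfree2, hUD, hLD⟩, ?_⟩
  have hmem : upperDensity A ∈
      upperDensity '' {B | SFree ({0, l1, l1 + l2} : Set ℤ) B ∧
        SFree (-({0, l1, l1 + l2} : Set ℤ)) B} := ⟨A, ⟨hfree1, hfree2⟩, rfl⟩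
  have hbdd : BddAbove (upperDensity '' {B | SFree ({0, l1, l1 + l2} : Set ℤ) B ∧
      SFree (-({0, l1, l1 + l2} : Set ℤ)) B}) := by
    refine ⟨1, ?_⟩
    rintro x ⟨B, -, rfl⟩
    exact upperDensity_le_one B
  have hle := le_csSup hbdd hmem
  rw [hUD] at hle
  exact hle

end Stmt4Proof
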